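/- Let n ≥ 2 and I = ({Y_iY_j}_{1≤i<j≤n}, X^3 + Σ_{i=2}^n L_i(Y_1^2 − Y_i^2)) in T = ℂ[X, Y_1,...,Y_n], where each L_i is a linear form. Suppose I is the ideal of a reduced set 𝕏 of 3n points. Then the Hilbert function of T/I is: 1 in degree 0, n+1 in degree 1, 2n+1 in degree 2, and 3n in every degree ≥ 3. -/
import Mathlib


open MvPolynomial
open scoped Classical

/-- Hilbert function in degree `d` of the graded quotient of the polynomial ring
by the `ℂ`-submodule `N`: the dimension of the image of the space of
degree-`d` homogeneous polynomials in the quotient. -/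
noncomputable def hfQ {σ : Type*} (N : Submodule ℂ (MvPolynomial σ ℂ)) (d : ℕ) : ℕ :=
  Module.finrank ℂ ((homogeneousSubmodule σ ℂ d).map N.mkQ)

/-- Homogeneous vanishing ideal of a set of projective points: all polynomials
vanishing on the corresponding lines through the origin. -/
noncomputable def projVanishingIdeal {σ : Type*} (S : Set (Projectivization ℂ (σ → ℂ))) :
    Ideal (MvPolynomial σ ℂ) :=
  ⨅ P ∈ S, ⨅ c : ℂ, RingHom.ker (MvPolynomial.eval (c • P.rep))

section AuxGen
variable {σ : Type*}

lemma degAdd (a b : σ →₀ ℕ) : (a + b).degree = a.degree + b.degree := by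
  simp [Finsupp.degree_eq_weight_one]

lemma degSingle (x : σ) (a : ℕ) : (Finsupp.single x a).degree = a := by
  classical
  simp [Finsupp.degree_eq_weight_one, Finsupp.weight_apply, Finsupp.sum_single_index]

lemma coeff_zero_of_mem_span_mon {A : Set (σ →₀ ℕ)} {p : MvPolynomial σ ℂ}
    (hp : p ∈ Submodule.span ℂ ((fun m => (monomial m (1:ℂ))) '' A)) {m : σ →₀ ℕ}
    (hm : m ∉ A) : coeff m p = 0 := by
  classical
  induction hp using Submodule.span_induction with
  | mem x hx =>
    obtain ⟨a, ha, rfl⟩ := hx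
    rcases eq_or_ne a m with h | h
    · exact absurd (h ▸ ha) hm
    · simp [coeff_monomial, h]
  | zero => simp
  | add x y _ _ hx hy => simp [hx, hy]
  | smul c x _ hx => simp [hx]

lemma mem_span_mon_of_support {A : Set (σ →₀ ℕ)} {p : MvPolynomial σ ℂ}
    (h : ↑p.support ⊆ A) :
    p ∈ Submodule.span ℂ ((fun m => (monomial m (1:ℂ))) '' A) := by
  classical
  rw [p.as_sum]
  refine Submodule.sum_mem _ fun m hm => ?_
  have : (monomial m (coeff m p)) = (coeff m p) • monomial m (1:ℂ) := by
    simp [smul_monomial]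
  rw [this]
  exact Submodule.smul_mem _ _ (Submodule.subset_span ⟨m, h hm, rfl⟩)

lemma homog_eq_span (d : ℕ) : homogeneousSubmodule σ ℂ d =
    Submodule.span ℂ ((fun m => (monomial m (1:ℂ))) '' {m : σ →₀ ℕ | m.degree = d}) := by
  apply le_antisymm
  · intro p hp
    refine mem_span_mon_of_support (fun m hm => ?_)
    have h2 := (mem_homogeneousSubmodule _ _).mp hp (MvPolynomial.mem_support_iff.mp hm)
    rw [Set.mem_setOf_eq, Finsupp.degree_eq_weight_one]
    exact h2
  · rw [Submodule.span_le]
    rintro _ ⟨m, hm, rfl⟩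
    exact isHomogeneous_monomial _ hm

lemma eval_smul_of_mem_span {d : ℕ} {p : MvPolynomial σ ℂ}
    (hp : p ∈ Submodule.span ℂ ((fun m => (monomial m (1:ℂ))) '' {m : σ →₀ ℕ | m.degree = d}))
    (c : ℂ) (v : σ → ℂ) :
    eval (c • v) p = c ^ d * eval v p := by
  classical
  induction hp using Submodule.span_induction with
  | mem x hx =>
    obtain ⟨m, hm, rfl⟩ := hx
    simp only [eval_monomial, one_mul]
    rw [show (Finsupp.prod m fun x k => (c • v) x ^ k)
        = ∏ x ∈ m.support, (c * v x) ^ m x from rfl]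
    simp only [mul_pow, Finset.prod_mul_distrib, Finset.prod_pow_eq_pow_sum]
    rw [show (∑ i ∈ m.support, m i) = m.degree from rfl, hm]
    rfl
  | zero => simp
  | add x y _ _ hx hy => simp [hx, hy]; ring
  | smul a x _ hx => simp [smul_eval, hx]; ring

lemma eval_smul_of_isHomogeneous {p : MvPolynomial σ ℂ} {d : ℕ}
    (hp : p.IsHomogeneous d) (c : ℂ) (v : σ → ℂ) :
    eval (c • v) p = c ^ d * eval v p :=
  eval_smul_of_mem_span (homog_eq_span d ▸ hp) c v

lemma XmulX (a b : σ) :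
    (X a * X b : MvPolynomial σ ℂ) = monomial (Finsupp.single a 1 + Finsupp.single b 1) 1 := by
  rw [← pow_one (X a), ← pow_one (X b), X_pow_eq_monomial, X_pow_eq_monomial,
    monomial_mul, one_mul]

lemma mon_single (x : σ) : monomial (Finsupp.single x 1) (1:ℂ) = X x := by
  rw [← X_pow_eq_monomial, pow_one]

lemma mon_add (a b : σ →₀ ℕ) :
    (monomial (a + b) (1:ℂ) : MvPolynomial σ ℂ) = monomial a 1 * monomial b 1 := by
  rw [monomial_mul, one_mul]

lemma single_eq_single_nat {x y : σ} {c : ℕ} (hc : c ≠ 0)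
    (h : Finsupp.single x c = Finsupp.single y c) : x = y := by
  classical
  by_contra hxy
  have h0 := DFunLike.congr_fun h x
  have hyx : ¬ (y = x) := fun hh => hxy hh.symm
  rw [Finsupp.single_apply, if_pos rfl, Finsupp.single_apply, if_neg hyx] at h0
  exact hc h0

lemma degree_eq_one_iff {m : σ →₀ ℕ} :
    m.degree = 1 ↔ ∃ x, m = Finsupp.single x 1 := by
  classical
  constructor
  · intro hm
    have hne : m ≠ 0 := by
      intro h; rw [h, map_zero] at hm; omega
    obtain ⟨x, hx⟩ : ∃ x, m x ≠ 0 := by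
      by_contra h; push_neg at h
      exact hne (Finsupp.ext fun y => h y)
    refine ⟨x, Finsupp.ext fun y => ?_⟩
    rcases eq_or_ne y x with rfl | hyx
    · rw [Finsupp.single_apply, if_pos rfl]
      have h1 : m y ≤ m.degree := Finsupp.le_degree y m
      omega
    · rw [Finsupp.single_apply, if_neg (fun h => hyx h.symm)]
      by_contra hy
      have hxs : x ∈ m.support := Finsupp.mem_support_iff.mpr hx
      have hys : y ∈ m.support := Finsupp.mem_support_iff.mpr hy
      have hsub : ({x, y} : Finset σ) ⊆ m.support := by
        intro z hz; simp only [Finset.mem_insert, Finset.mem_singleton] at hz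
        rcases hz with rfl | rfl <;> assumption
      have hle : ∑ z ∈ ({x, y} : Finset σ), m z ≤ m.degree :=
        Finset.sum_le_sum_of_subset hsub
      rw [Finset.sum_pair (fun h => hyx h.symm)] at hle
      omega
  · rintro ⟨x, rfl⟩; exact degSingle x 1

end AuxGen

def MixedSet (n : ℕ) : Set ((Unit ⊕ Fin n) →₀ ℕ) :=
  {m | ∃ i j : Fin n, i ≠ j ∧ m (Sum.inr i) ≠ 0 ∧ m (Sum.inr j) ≠ 0}

noncomputable def x3f (n : ℕ) : (Unit ⊕ Fin n) →₀ ℕ := Finsupp.single (Sum.inl ()) 3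

lemma x3f_not_mixed (n : ℕ) : x3f n ∉ MixedSet n := by
  rintro ⟨i, j, hij, hi, hj⟩
  simp [x3f, Finsupp.single_apply] at hi

lemma x3f_degree (n : ℕ) : (x3f n).degree = 3 := degSingle _ _

lemma mixed_of_le {n : ℕ} {u v m : (Unit ⊕ Fin n) →₀ ℕ} (h : u + v = m)
    (hv : v ∈ MixedSet n) : m ∈ MixedSet n := by
  obtain ⟨i, j, hij, hi, hj⟩ := hv
  refine ⟨i, j, hij, ?_, ?_⟩ <;>
  · rw [← h]
    simp only [Finsupp.add_apply]
    omega

lemma key {n : ℕ} {F : MvPolynomial (Unit ⊕ Fin n) ℂ} (hF : F.IsHomogeneous 3)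
    (hFx3 : coeff (x3f n) F = 1)
    {S : Set (MvPolynomial (Unit ⊕ Fin n) ℂ)}
    (hS : ∀ g ∈ S, g = F ∨ ∃ i j : Fin n, i ≠ j ∧ g = X (Sum.inr i) * X (Sum.inr j))
    {p} (hp : p ∈ Ideal.span S) :
    (∀ m : (Unit ⊕ Fin n) →₀ ℕ, m.degree ≤ 1 → coeff m p = 0) ∧
    (∀ m : (Unit ⊕ Fin n) →₀ ℕ, m.degree = 2 → m ∉ MixedSet n → coeff m p = 0) ∧
    (∀ m : (Unit ⊕ Fin n) →₀ ℕ, m.degree = 3 → m ∉ MixedSet n →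
      coeff m p = coeff (x3f n) p * coeff m F) := by
  classical
  induction hp using Submodule.span_induction with
  | mem g hg =>
    rcases hS g hg with rfl | ⟨i, j, hij, rfl⟩
    · refine ⟨fun m hm => hF.coeff_eq_zero (by omega), fun m hm _ => hF.coeff_eq_zero (by omega),
        fun m _ _ => by rw [hFx3, one_mul]⟩
    · rw [XmulX]
      set mg := Finsupp.single (Sum.inr i : Unit ⊕ Fin n) 1 + Finsupp.single (Sum.inr j) 1 with hmg
      have hdeg : mg.degree = 2 := by rw [degAdd, degSingle, degSingle]
      have hmix : mg ∈ MixedSet n := by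
        refine ⟨i, j, hij, ?_, ?_⟩ <;>
          simp [hmg, Finsupp.single_apply, Finsupp.add_apply, Sum.inr.injEq, hij, hij.symm]
      refine ⟨fun m hm => ?_, fun m hm hmm => ?_, fun m hm hmm => ?_⟩
      · rw [coeff_monomial, if_neg]
        rintro rfl; omega
      · rw [coeff_monomial, if_neg]
        rintro rfl; exact hmm hmix
      · rw [coeff_monomial, if_neg, coeff_monomial, if_neg, zero_mul]
        · intro h; rw [h, x3f_degree] at hdeg; omega
        · rintro rfl; omega
  | zero => exact ⟨fun m _ => by simp, fun m _ _ => by simp, fun m _ _ => by simp⟩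
  | add x y _ _ hx hy =>
    obtain ⟨hx1, hx2, hx3⟩ := hx
    obtain ⟨hy1, hy2, hy3⟩ := hy
    refine ⟨fun m hm => by simp [hx1 m hm, hy1 m hm],
      fun m hm hmm => by simp [hx2 m hm hmm, hy2 m hm hmm],
      fun m hm hmm => by simp [coeff_add, hx3 m hm hmm, hy3 m hm hmm]; ring⟩
  | smul a p hpmem hp =>
    obtain ⟨h1, h2, h3⟩ := hp
    rw [smul_eq_mul]
    have hform : ∀ m : (Unit ⊕ Fin n) →₀ ℕ, m.degree = 3 → m ∉ MixedSet n →
        coeff m (a * p) = coeff 0 a * (coeff (x3f n) p * coeff m F) := by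
      intro m hm hmm
      rw [coeff_mul]
      rw [Finset.sum_eq_single_of_mem ((0 : (Unit ⊕ Fin n) →₀ ℕ), m)
        (Finset.HasAntidiagonal.mem_antidiagonal.mpr (zero_add m))]
      · rw [h3 m hm hmm]
      · rintro ⟨u, v⟩ huv hne
        have hsum : u + v = m := Finset.HasAntidiagonal.mem_antidiagonal.mp huv
        have hdeg : u.degree + v.degree = 3 := by rw [← degAdd, hsum, hm]
        have hu : u ≠ 0 := by
          rintro rfl
          exact hne (by rw [zero_add] at hsum; rw [hsum])
        have hud : u.degree ≠ 0 := fun h => hu ((Finsupp.degree_eq_zero_iff u).mp h)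
        rcases Nat.lt_or_ge v.degree 2 with hv | hv
        · rw [h1 v (by omega), mul_zero]
        · have hv2 : v.degree = 2 := by omega
          have hvnm : v ∉ MixedSet n := fun h => hmm (mixed_of_le hsum h)
          rw [h2 v hv2 hvnm, mul_zero]
    refine ⟨fun m hm => ?_, fun m hm hmm => ?_, fun m hm hmm => ?_⟩
    · rw [coeff_mul]
      refine Finset.sum_eq_zero ?_
      rintro ⟨u, v⟩ huv
      have hsum : u + v = m := Finset.HasAntidiagonal.mem_antidiagonal.mp huv
      have hdeg : u.degree + v.degree = m.degree := by rw [← degAdd, hsum]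
      rw [h1 v (by omega), mul_zero]
    · rw [coeff_mul]
      refine Finset.sum_eq_zero ?_
      rintro ⟨u, v⟩ huv
      have hsum : u + v = m := Finset.HasAntidiagonal.mem_antidiagonal.mp huv
      have hdeg : u.degree + v.degree = 2 := by rw [← degAdd, hsum, hm]
      rcases Nat.lt_or_ge v.degree 2 with hv | hv
      · rw [h1 v (by omega), mul_zero]
      · have hu : u.degree = 0 := by omega
        have hu0 : u = 0 := (Finsupp.degree_eq_zero_iff u).mp hu
        subst hu0
        rw [zero_add] at hsum
        subst hsum
        rw [h2 v hm hmm, mul_zero]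
    · rw [hform m hm hmm, hform (x3f n) (x3f_degree n) (x3f_not_mixed n), hFx3]
      ring

lemma pure_decomp {n : ℕ} (hn : 0 < n) {m : (Unit ⊕ Fin n) →₀ ℕ} (hm : m ∉ MixedSet n) :
    ∃ (a b : ℕ) (i : Fin n),
      m = Finsupp.single (Sum.inl ()) a + Finsupp.single (Sum.inr i) b ∧ a + b = m.degree := by
  classical
  have hpure : ∀ i j : Fin n, i ≠ j → m (Sum.inr i) ≠ 0 → m (Sum.inr j) = 0 := by
    intro i j hij hi
    by_contra hj
    exact hm ⟨i, j, hij, hi, hj⟩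
  by_cases hex : ∃ i : Fin n, m (Sum.inr i) ≠ 0
  · obtain ⟨i, hi⟩ := hex
    have heq : m = Finsupp.single (Sum.inl ()) (m (Sum.inl ()))
        + Finsupp.single (Sum.inr i) (m (Sum.inr i)) := by
      refine Finsupp.ext fun y => ?_
      rcases y with u | j
      · cases u
        simp [Finsupp.single_apply]
      · rcases eq_or_ne j i with rfl | hji
        · simp [Finsupp.single_apply]
        · have hij' : i ≠ j := fun h => hji h.symm
          have hij0 : m (Sum.inr j) = 0 := hpure i j hij' hi
          simp [Finsupp.single_apply, Sum.inr.injEq, hij', hij0]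
    refine ⟨_, _, i, heq, ?_⟩
    conv_rhs => rw [heq]
    rw [degAdd, degSingle, degSingle]
  · push_neg at hex
    have heq : m = Finsupp.single (Sum.inl ()) (m (Sum.inl ()))
        + Finsupp.single (Sum.inr (⟨0, hn⟩ : Fin n)) 0 := by
      refine Finsupp.ext fun y => ?_
      rcases y with u | j
      · cases u; simp [Finsupp.single_apply]
      · simp [Finsupp.single_apply, hex j]
    refine ⟨_, _, ⟨0, hn⟩, heq, ?_⟩
    conv_rhs => rw [heq]
    rw [degAdd, degSingle, degSingle]

noncomputable def mu2 (n : ℕ) : Unit ⊕ Fin n ⊕ Fin n → ((Unit ⊕ Fin n) →₀ ℕ)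
  | Sum.inl _ => Finsupp.single (Sum.inl ()) 2
  | Sum.inr (Sum.inl i) => Finsupp.single (Sum.inl ()) 1 + Finsupp.single (Sum.inr i) 1
  | Sum.inr (Sum.inr i) => Finsupp.single (Sum.inr i) 2

noncomputable def mu3 (n : ℕ) : Fin n ⊕ Fin n ⊕ Fin n → ((Unit ⊕ Fin n) →₀ ℕ)
  | Sum.inl i => Finsupp.single (Sum.inl ()) 2 + Finsupp.single (Sum.inr i) 1
  | Sum.inr (Sum.inl i) => Finsupp.single (Sum.inl ()) 1 + Finsupp.single (Sum.inr i) 2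
  | Sum.inr (Sum.inr i) => Finsupp.single (Sum.inr i) 3

lemma mu2_degree {n : ℕ} (k) : (mu2 n k).degree = 2 := by
  rcases k with _ | k | k <;> simp [mu2, degAdd, degSingle]

lemma mu3_degree {n : ℕ} (k) : (mu3 n k).degree = 3 := by
  rcases k with k | k | k <;> simp [mu3, degAdd, degSingle]

lemma mu2_not_mixed {n : ℕ} (k) : mu2 n k ∉ MixedSet n := by
  rintro ⟨i, j, hij, hi, hj⟩
  rcases k with _ | k | k <;>
    simp only [mu2, Finsupp.add_apply, Finsupp.single_apply] at hi hj <;>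
    split_ifs at hi hj <;> simp_all <;> exact hij (by subst_vars; rfl)

lemma mu3_not_mixed {n : ℕ} (k) : mu3 n k ∉ MixedSet n := by
  rintro ⟨i, j, hij, hi, hj⟩
  rcases k with k | k | k <;>
    simp only [mu3, Finsupp.add_apply, Finsupp.single_apply] at hi hj <;>
    split_ifs at hi hj <;> simp_all <;> exact hij (by subst_vars; rfl)

lemma mu3_ne_x3f {n : ℕ} (k) : mu3 n k ≠ x3f n := by
  intro h
  have h0 := DFunLike.congr_fun h (Sum.inl ())
  rcases k with k | k | k <;>
    simp [mu3, x3f, Finsupp.single_apply, Finsupp.add_apply] at h0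

lemma mu2_inj {n : ℕ} : Function.Injective (mu2 n) := by
  intro a b h
  rcases a with a | a | a <;> rcases b with b | b | b
  · exact congrArg Sum.inl (Subsingleton.elim a b)
  · exfalso; have h0 := DFunLike.congr_fun h (Sum.inl ())
    simp [mu2, Finsupp.single_apply] at h0
  · exfalso; have h0 := DFunLike.congr_fun h (Sum.inl ())
    simp [mu2, Finsupp.single_apply] at h0
  · exfalso; have h0 := DFunLike.congr_fun h (Sum.inl ())
    simp [mu2, Finsupp.single_apply] at h0
  · simp only [mu2] at h
    have h2 := add_left_cancel h
    have h3 := Sum.inr_injective (single_eq_single_nat one_ne_zero h2)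
    rw [h3]
  · exfalso; have h0 := DFunLike.congr_fun h (Sum.inl ())
    simp [mu2, Finsupp.single_apply] at h0
  · exfalso; have h0 := DFunLike.congr_fun h (Sum.inl ())
    simp [mu2, Finsupp.single_apply] at h0
  · exfalso; have h0 := DFunLike.congr_fun h (Sum.inl ())
    simp [mu2, Finsupp.single_apply] at h0
  · simp only [mu2] at h
    have h3 := Sum.inr_injective (single_eq_single_nat two_ne_zero h)
    rw [h3]

lemma mu3_inj {n : ℕ} : Function.Injective (mu3 n) := by
  intro a b h
  rcases a with a | a | a <;> rcases b with b | b | b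
  · simp only [mu3] at h
    have h2 := add_left_cancel h
    have h3 := Sum.inr_injective (single_eq_single_nat one_ne_zero h2)
    rw [h3]
  · exfalso; have h0 := DFunLike.congr_fun h (Sum.inl ())
    simp [mu3, Finsupp.single_apply] at h0
  · exfalso; have h0 := DFunLike.congr_fun h (Sum.inl ())
    simp [mu3, Finsupp.single_apply] at h0
  · exfalso; have h0 := DFunLike.congr_fun h (Sum.inl ())
    simp [mu3, Finsupp.single_apply] at h0
  · simp only [mu3] at h
    have h2 := add_left_cancel h
    have h3 := Sum.inr_injective (single_eq_single_nat two_ne_zero h2)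
    rw [h3]
  · exfalso; have h0 := DFunLike.congr_fun h (Sum.inl ())
    simp [mu3, Finsupp.single_apply] at h0
  · exfalso; have h0 := DFunLike.congr_fun h (Sum.inl ())
    simp [mu3, Finsupp.single_apply] at h0
  · exfalso; have h0 := DFunLike.congr_fun h (Sum.inl ())
    simp [mu3, Finsupp.single_apply] at h0
  · simp only [mu3] at h
    have h3 := Sum.inr_injective (single_eq_single_nat three_ne_zero h)
    rw [h3]

lemma mixed_mem {n : ℕ} {I : Ideal (MvPolynomial (Unit ⊕ Fin n) ℂ)}
    (hquad : ∀ i j : Fin n, i ≠ j → X (Sum.inr i) * X (Sum.inr j) ∈ I)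
    {m : (Unit ⊕ Fin n) →₀ ℕ} (hm : m ∈ MixedSet n) : monomial m (1:ℂ) ∈ I := by
  classical
  obtain ⟨i, j, hij, hi, hj⟩ := hm
  set s : (Unit ⊕ Fin n) →₀ ℕ :=
    Finsupp.single (Sum.inr i) 1 + Finsupp.single (Sum.inr j) 1 with hs
  have hle : s ≤ m := by
    rw [Finsupp.le_def]
    intro x
    rcases x with u | k
    · simp [hs, Finsupp.single_apply]
    · simp only [hs, Finsupp.add_apply, Finsupp.single_apply]
      rcases eq_or_ne i k with rfl | hki
      · rw [if_pos rfl, if_neg (fun h : (Sum.inr j : Unit ⊕ Fin n) = Sum.inr i =>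
          hij (Sum.inr_injective h).symm)]
        omega
      · rw [if_neg (fun h : (Sum.inr i : Unit ⊕ Fin n) = Sum.inr k =>
          hki (Sum.inr_injective h))]
        rcases eq_or_ne j k with rfl | hkj
        · rw [if_pos rfl]; omega
        · rw [if_neg (fun h : (Sum.inr j : Unit ⊕ Fin n) = Sum.inr k =>
            hkj (Sum.inr_injective h))]
          omega
  have hsplit : s + (m - s) = m := add_tsub_cancel_of_le hle
  have hfactor : monomial m (1:ℂ) = (X (Sum.inr i) * X (Sum.inr j)) * monomial (m - s) 1 := by
    rw [XmulX, ← mon_add, hsplit]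
  rw [hfactor]
  exact Ideal.mul_mem_right _ _ (hquad i j hij)

set_option maxHeartbeats 4000000 in
/-- For `n ≥ 2`, if `I = ({Y_iY_j}_{i<j}, X^3 + Σ_{i≥2} L_i(Y_1^2 − Y_i^2))` (with the
`L_i` linear forms) is the vanishing ideal of a reduced set `𝕏` of `3n` points, then the
Hilbert function of `T/I` is `1, n+1, 2n+1` in degrees `0,1,2` and `3n` in degrees `≥ 3`. -/
theorem statement19 (n : ℕ) (hn : 2 ≤ n)
    (L : Fin n → MvPolynomial (Unit ⊕ Fin n) ℂ) (hL : ∀ i, (L i).IsHomogeneous 1) :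
    let Y : Fin n → MvPolynomial (Unit ⊕ Fin n) ℂ := fun i => X (Sum.inr i)
    let I : Ideal (MvPolynomial (Unit ⊕ Fin n) ℂ) := Ideal.span
      ({p | ∃ i j : Fin n, i < j ∧ p = Y i * Y j} ∪
       {(X (Sum.inl ())) ^ 3 + ∑ i ∈ Finset.univ.erase ⟨0, by omega⟩,
          L i * ((Y ⟨0, by omega⟩) ^ 2 - (Y i) ^ 2)})
    (∃ 𝕏 : Finset (Projectivization ℂ ((Unit ⊕ Fin n) → ℂ)),
      𝕏.card = 3 * n ∧ I = projVanishingIdeal ↑𝕏) →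
    hfQ (Submodule.restrictScalars ℂ I) 0 = 1 ∧
    hfQ (Submodule.restrictScalars ℂ I) 1 = n + 1 ∧
    hfQ (Submodule.restrictScalars ℂ I) 2 = 2 * n + 1 ∧
    ∀ d, 3 ≤ d → hfQ (Submodule.restrictScalars ℂ I) d = 3 * n := by
  intro Y I hpts
  obtain ⟨𝕏, hcard, hIdeal⟩ := hpts
  have hn0 : 0 < n := by omega
  set i0 : Fin n := ⟨0, hn0⟩ with hi0def
  set F : MvPolynomial (Unit ⊕ Fin n) ℂ :=
    (X (Sum.inl ())) ^ 3 + ∑ i ∈ Finset.univ.erase i0,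
      L i * ((X (Sum.inr i0) : MvPolynomial (Unit ⊕ Fin n) ℂ) ^ 2 - (X (Sum.inr i)) ^ 2)
    with hFdef
  set S : Set (MvPolynomial (Unit ⊕ Fin n) ℂ) :=
    ({p | ∃ i j : Fin n, i < j ∧ p = X (Sum.inr i) * X (Sum.inr j)} ∪ {F}) with hSdef
  have hIdef : I = Ideal.span S := rfl
  -- basic facts about F
  have hF3 : F.IsHomogeneous 3 := by
    rw [hFdef]
    refine (isHomogeneous_X_pow _ _).add (IsHomogeneous.sum _ _ _ fun i _ => ?_)
    have h2 : ((X (Sum.inr i0) : MvPolynomial (Unit ⊕ Fin n) ℂ) ^ 2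
        - (X (Sum.inr i)) ^ 2).IsHomogeneous 2 :=
      (isHomogeneous_X_pow _ _).sub (isHomogeneous_X_pow _ _)
    simpa using (hL i).mul h2
  have hFx3 : coeff (x3f n) F = 1 := by
    rw [hFdef, coeff_add, coeff_sum]
    have h1 : coeff (x3f n) ((X (Sum.inl () : Unit ⊕ Fin n)) ^ 3 : MvPolynomial _ ℂ) = 1 := by
      rw [coeff_X_pow]
      rw [show (Finsupp.single (Sum.inl () : Unit ⊕ Fin n) 3) = x3f n from rfl, if_pos rfl]
    rw [h1]
    have hzero : ∀ i ∈ Finset.univ.erase i0, coeff (x3f n)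
        (L i * ((X (Sum.inr i0) : MvPolynomial (Unit ⊕ Fin n) ℂ) ^ 2 - (X (Sum.inr i)) ^ 2))
        = 0 := by
      intro i _
      rw [coeff_mul]
      refine Finset.sum_eq_zero ?_
      rintro ⟨u, v⟩ huv
      have hsum : u + v = x3f n := Finset.HasAntidiagonal.mem_antidiagonal.mp huv
      have hvr : ∀ j : Fin n, v (Sum.inr j) = 0 := by
        intro j
        have := DFunLike.congr_fun hsum (Sum.inr j)
        simp only [Finsupp.add_apply, x3f, Finsupp.single_apply] at this
        simp only [if_neg (by simp : ¬ (Sum.inl () = (Sum.inr j : Unit ⊕ Fin n)))] at this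
        omega
      have hv0 : coeff v ((X (Sum.inr i0) : MvPolynomial (Unit ⊕ Fin n) ℂ) ^ 2
          - (X (Sum.inr i)) ^ 2) = 0 := by
        rw [coeff_sub, coeff_X_pow, coeff_X_pow, if_neg, if_neg, sub_zero]
        · intro h
          have := DFunLike.congr_fun h (Sum.inr i)
          rw [Finsupp.single_apply, if_pos rfl, hvr i] at this
          omega
        · intro h
          have := DFunLike.congr_fun h (Sum.inr i0)
          rw [Finsupp.single_apply, if_pos rfl, hvr i0] at this
          omega
      rw [hv0, mul_zero]
    rw [Finset.sum_eq_zero hzero, add_zero]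

  have hSgen : ∀ g ∈ S, g = F ∨ ∃ i j : Fin n, i ≠ j ∧ g = X (Sum.inr i) * X (Sum.inr j) := by
    rintro g (⟨i, j, hij, rfl⟩ | hg)
    · exact Or.inr ⟨i, j, ne_of_lt hij, rfl⟩
    · exact Or.inl hg
  have hkey : ∀ p ∈ I, (∀ m : (Unit ⊕ Fin n) →₀ ℕ, m.degree ≤ 1 → coeff m p = 0) ∧
      (∀ m : (Unit ⊕ Fin n) →₀ ℕ, m.degree = 2 → m ∉ MixedSet n → coeff m p = 0) ∧
      (∀ m : (Unit ⊕ Fin n) →₀ ℕ, m.degree = 3 → m ∉ MixedSet n →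
        coeff m p = coeff (x3f n) p * coeff m F) :=
    fun p hp => key hF3 hFx3 hSgen (hIdef ▸ hp)
  have hquad : ∀ i j : Fin n, i ≠ j → X (Sum.inr i) * X (Sum.inr j) ∈ I := by
    intro i j hij
    rcases lt_or_gt_of_ne hij with h | h
    · exact Ideal.subset_span (Or.inl ⟨i, j, h, rfl⟩)
    · rw [mul_comm]
      exact Ideal.subset_span (Or.inl ⟨j, i, h, rfl⟩)
  have hFI : F ∈ I := Ideal.subset_span (Or.inr rfl)
  -- the quotient module
  set N : Submodule ℂ (MvPolynomial (Unit ⊕ Fin n) ℂ) := Submodule.restrictScalars ℂ I with hNdef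
  have hq0 : ∀ p ∈ I, N.mkQ p = 0 := fun p hp =>
    (Submodule.Quotient.mk_eq_zero N).mpr ((Submodule.restrictScalars_mem ℂ I p).mpr hp)
  have hq0' : ∀ p, N.mkQ p = 0 → p ∈ I := fun p hp =>
    (Submodule.restrictScalars_mem ℂ I p).mp ((Submodule.Quotient.mk_eq_zero N).mp hp)
  have hWdef : ∀ d : ℕ, (homogeneousSubmodule (Unit ⊕ Fin n) ℂ d).map N.mkQ =
      Submodule.span ℂ (N.mkQ '' ((fun m => (monomial m (1:ℂ))) '' {m | m.degree = d})) := by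
    intro d
    rw [homog_eq_span, Submodule.map_span]
  have hfinW : ∀ d : ℕ, FiniteDimensional ℂ
      ((homogeneousSubmodule (Unit ⊕ Fin n) ℂ d).map N.mkQ) := by
    intro d
    rw [hWdef d]
    refine FiniteDimensional.span_of_finite _ (Set.Finite.image _ (Set.Finite.image _ ?_))
    exact (Finsupp.finite_of_degree_le d).subset (fun m hm => le_of_eq hm)
  -- membership in the vanishing ideal
  have hPVI : ∀ p : MvPolynomial (Unit ⊕ Fin n) ℂ,
      p ∈ I ↔ ∀ P ∈ 𝕏, ∀ c : ℂ, eval (c • P.rep) p = 0 := by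
    intro p
    rw [hIdeal]
    simp [projVanishingIdeal, Ideal.mem_iInf, RingHom.mem_ker]
  -- degree 0
  have deg0 : hfQ N 0 = 1 := by
    have h0set : {m : (Unit ⊕ Fin n) →₀ ℕ | m.degree = 0} = {0} := by
      ext m; simp [Finsupp.degree_eq_zero_iff]
    have hW0 : (homogeneousSubmodule (Unit ⊕ Fin n) ℂ 0).map N.mkQ =
        Submodule.span ℂ {N.mkQ 1} := by
      rw [hWdef 0, h0set, Set.image_singleton, Set.image_singleton]
      norm_num
    have hone : N.mkQ 1 ≠ 0 := by
      intro h
      have h1 : (1 : MvPolynomial (Unit ⊕ Fin n) ℂ) ∈ I := hq0' 1 h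
      have := (hkey 1 h1).1 0 (by simp)
      simp at this
    show Module.finrank ℂ ((homogeneousSubmodule (Unit ⊕ Fin n) ℂ 0).map N.mkQ) = 1
    rw [hW0]
    exact finrank_span_singleton hone
  -- degree 1
  have deg1 : hfQ N 1 = n + 1 := by
    have h1set : {m : (Unit ⊕ Fin n) →₀ ℕ | m.degree = 1} =
        Set.range (fun x : Unit ⊕ Fin n => Finsupp.single x 1) := by
      ext m
      simp only [Set.mem_setOf_eq, Set.mem_range, degree_eq_one_iff]
      exact ⟨fun ⟨x, hx⟩ => ⟨x, hx.symm⟩, fun ⟨x, hx⟩ => ⟨x, hx.symm⟩⟩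
    have hW1 : (homogeneousSubmodule (Unit ⊕ Fin n) ℂ 1).map N.mkQ =
        Submodule.span ℂ (Set.range (fun x : Unit ⊕ Fin n => N.mkQ (X x))) := by
      rw [hWdef 1, h1set, ← Set.range_comp, ← Set.range_comp]
      have hcmp : (⇑N.mkQ ∘ ((fun m => (monomial m (1:ℂ))) ∘
          fun x : Unit ⊕ Fin n => Finsupp.single x 1)) = fun x => N.mkQ (X x) := by
        funext x
        simp [Function.comp, mon_single]
      rw [hcmp]
    have hind : LinearIndependent ℂ (fun x : Unit ⊕ Fin n => N.mkQ (X x)) := by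
      rw [Fintype.linearIndependent_iff]
      intro g hg x
      set p : MvPolynomial (Unit ⊕ Fin n) ℂ := ∑ y : Unit ⊕ Fin n, g y • X y with hpdef
      have hqp : N.mkQ p = 0 := by
        rw [hpdef, map_sum]
        simpa using hg
      have hpI : p ∈ I := hq0' p hqp
      have hcoeff : coeff (Finsupp.single x 1) p = g x := by
        rw [hpdef, coeff_sum]
        rw [Finset.sum_eq_single x]
        · simp [coeff_smul, coeff_X', if_pos rfl]
        · intro y _ hyx
          rw [coeff_smul, coeff_X',
            if_neg (fun h => hyx (single_eq_single_nat one_ne_zero h))]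
          simp
        · simp
      have := (hkey p hpI).1 (Finsupp.single x 1) (le_of_eq (degSingle x 1))
      rw [this] at hcoeff
      exact hcoeff.symm
    show Module.finrank ℂ ((homogeneousSubmodule (Unit ⊕ Fin n) ℂ 1).map N.mkQ) = n + 1
    rw [hW1, finrank_span_eq_card hind]
    simp only [Fintype.card_sum, Fintype.card_unit, Fintype.card_fin]
    omega
  -- degree 2
  have deg2 : hfQ N 2 = 2 * n + 1 := by
    have hW2 : (homogeneousSubmodule (Unit ⊕ Fin n) ℂ 2).map N.mkQ =
        Submodule.span ℂ (Set.range (fun k => N.mkQ (monomial (mu2 n k) 1))) := by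
      apply le_antisymm
      · rw [hWdef 2, Submodule.span_le]
        rintro _ ⟨_, ⟨m, hm, rfl⟩, rfl⟩
        rw [Set.mem_setOf_eq] at hm
        by_cases hmix : m ∈ MixedSet n
        · rw [SetLike.mem_coe, hq0 _ (mixed_mem hquad hmix)]
          exact Submodule.zero_mem _
        · obtain ⟨a, b, i, heq, hab⟩ := pure_decomp hn0 hmix
          rw [hm] at hab
          have hcases : (a = 2 ∧ b = 0) ∨ (a = 1 ∧ b = 1) ∨ (a = 0 ∧ b = 2) := by omega
          rcases hcases with ⟨rfl, rfl⟩ | ⟨rfl, rfl⟩ | ⟨rfl, rfl⟩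
          · refine Submodule.subset_span ⟨Sum.inl (), ?_⟩
            refine congrArg (fun m' => N.mkQ (monomial m' 1)) ?_
            rw [heq]
            simp [mu2]
          · refine Submodule.subset_span ⟨Sum.inr (Sum.inl i), ?_⟩
            refine congrArg (fun m' => N.mkQ (monomial m' 1)) ?_
            rw [heq]
            simp [mu2]
          · refine Submodule.subset_span ⟨Sum.inr (Sum.inr i), ?_⟩
            refine congrArg (fun m' => N.mkQ (monomial m' 1)) ?_
            rw [heq]
            simp [mu2]
      · rw [Submodule.span_le]
        rintro _ ⟨k, rfl⟩
        exact Submodule.mem_map_of_mem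
          ((mem_homogeneousSubmodule _ _).mpr (isHomogeneous_monomial _ (mu2_degree k)))
    have hind : LinearIndependent ℂ (fun k => N.mkQ (monomial (mu2 n k) (1:ℂ))) := by
      rw [Fintype.linearIndependent_iff]
      intro g hg k
      set p : MvPolynomial (Unit ⊕ Fin n) ℂ := ∑ y, g y • monomial (mu2 n y) 1 with hpdef
      have hqp : N.mkQ p = 0 := by
        rw [hpdef, map_sum]
        simpa using hg
      have hpI : p ∈ I := hq0' p hqp
      have hcoeff : coeff (mu2 n k) p = g k := by
        rw [hpdef, coeff_sum]
        rw [Finset.sum_eq_single k]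
        · simp [coeff_smul, coeff_monomial]
        · intro y _ hyk
          rw [coeff_smul, coeff_monomial, if_neg (fun h => hyk (mu2_inj h))]
          simp
        · simp
      have := (hkey p hpI).2.1 (mu2 n k) (mu2_degree k) (mu2_not_mixed k)
      rw [this] at hcoeff
      exact hcoeff.symm
    show Module.finrank ℂ ((homogeneousSubmodule (Unit ⊕ Fin n) ℂ 2).map N.mkQ) = 2 * n + 1
    rw [hW2, finrank_span_eq_card hind]
    simp only [Fintype.card_sum, Fintype.card_unit, Fintype.card_fin]
    omega
  -- degree 3
  have hx3span : N.mkQ (monomial (x3f n) 1) ∈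
      Submodule.span ℂ (Set.range (fun k => N.mkQ (monomial (mu3 n k) 1))) := by
    have hXY2 : ∀ (x : Unit ⊕ Fin n) (j : Fin n),
        N.mkQ (X x * (X (Sum.inr j) : MvPolynomial (Unit ⊕ Fin n) ℂ) ^ 2) ∈
        Submodule.span ℂ (Set.range (fun k => N.mkQ (monomial (mu3 n k) 1))) := by
      intro x j
      rcases x with u | k
      · cases u
        refine Submodule.subset_span ⟨Sum.inr (Sum.inl j), ?_⟩
        refine congrArg N.mkQ ?_
        rw [show mu3 n (Sum.inr (Sum.inl j)) =
          Finsupp.single (Sum.inl ()) 1 + Finsupp.single (Sum.inr j) 2 from rfl]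
        rw [mon_add, mon_single, X_pow_eq_monomial]
      · rcases eq_or_ne k j with heq | hkj
        · rw [heq]
          refine Submodule.subset_span ⟨Sum.inr (Sum.inr j), ?_⟩
          refine congrArg N.mkQ ?_
          rw [show mu3 n (Sum.inr (Sum.inr j)) = Finsupp.single (Sum.inr j : Unit ⊕ Fin n) 3
            from rfl]
          rw [← X_pow_eq_monomial]
          ring
        · have hmix : (Finsupp.single (Sum.inr k : Unit ⊕ Fin n) 1
              + Finsupp.single (Sum.inr j) 2) ∈ MixedSet n := by
            refine ⟨k, j, hkj, ?_, ?_⟩ <;>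
              simp [Finsupp.add_apply, Finsupp.single_apply, Sum.inr.injEq, hkj, hkj.symm]
          have heq : X (Sum.inr k) * (X (Sum.inr j) : MvPolynomial (Unit ⊕ Fin n) ℂ) ^ 2 =
              monomial (Finsupp.single (Sum.inr k : Unit ⊕ Fin n) 1
                + Finsupp.single (Sum.inr j) 2) 1 := by
            rw [mon_add, mon_single, X_pow_eq_monomial]
          rw [heq, hq0 _ (mixed_mem hquad hmix)]
          exact Submodule.zero_mem _
    have hprod : ∀ (j : Fin n) (r : MvPolynomial (Unit ⊕ Fin n) ℂ), r.IsHomogeneous 1 →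
        N.mkQ (r * ((X (Sum.inr i0) : MvPolynomial (Unit ⊕ Fin n) ℂ) ^ 2
          - (X (Sum.inr j)) ^ 2)) ∈
        Submodule.span ℂ (Set.range (fun k => N.mkQ (monomial (mu3 n k) 1))) := by
      intro j r hr
      have hr' : r ∈ Submodule.span ℂ
          ((fun m => (monomial m (1:ℂ))) '' {m : (Unit ⊕ Fin n) →₀ ℕ | m.degree = 1}) :=
        homog_eq_span 1 ▸ hr
      clear hr
      induction hr' using Submodule.span_induction with
      | mem x hx =>
        obtain ⟨m, hm, rfl⟩ := hx
        obtain ⟨y, rfl⟩ := degree_eq_one_iff.mp hm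
        simp only [mon_single]
        rw [mul_sub, map_sub]
        exact Submodule.sub_mem _ (hXY2 y i0) (hXY2 y j)
      | zero => rw [zero_mul, map_zero]; exact Submodule.zero_mem _
      | add x y _ _ hx hy =>
        rw [add_mul, map_add]
        exact Submodule.add_mem _ hx hy
      | smul c x _ hx =>
        rw [smul_mul_assoc, map_smul]
        exact Submodule.smul_mem _ _ hx
    have hXcube : (monomial (x3f n) (1:ℂ) : MvPolynomial (Unit ⊕ Fin n) ℂ) =
        F - ∑ i ∈ Finset.univ.erase i0,
          L i * ((X (Sum.inr i0) : MvPolynomial (Unit ⊕ Fin n) ℂ) ^ 2 - (X (Sum.inr i)) ^ 2) := by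
      rw [show (monomial (x3f n) (1:ℂ) : MvPolynomial (Unit ⊕ Fin n) ℂ)
        = X (Sum.inl ()) ^ 3 from X_pow_eq_monomial.symm, hFdef]
      ring
    rw [hXcube, map_sub, hq0 F hFI, zero_sub, map_sum]
    exact Submodule.neg_mem _ (Submodule.sum_mem _ fun i _ => hprod i (L i) (hL i))
  have deg3 : hfQ N 3 = 3 * n := by
    have hW3 : (homogeneousSubmodule (Unit ⊕ Fin n) ℂ 3).map N.mkQ =
        Submodule.span ℂ (Set.range (fun k => N.mkQ (monomial (mu3 n k) 1))) := by
      apply le_antisymm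
      · rw [hWdef 3, Submodule.span_le]
        rintro _ ⟨_, ⟨m, hm, rfl⟩, rfl⟩
        rw [Set.mem_setOf_eq] at hm
        by_cases hmix : m ∈ MixedSet n
        · rw [SetLike.mem_coe, hq0 _ (mixed_mem hquad hmix)]
          exact Submodule.zero_mem _
        · obtain ⟨a, b, i, heq, hab⟩ := pure_decomp hn0 hmix
          rw [hm] at hab
          have hcases : (a = 3 ∧ b = 0) ∨ (a = 2 ∧ b = 1) ∨ (a = 1 ∧ b = 2)
              ∨ (a = 0 ∧ b = 3) := by omega
          rcases hcases with ⟨rfl, rfl⟩ | ⟨rfl, rfl⟩ | ⟨rfl, rfl⟩ | ⟨rfl, rfl⟩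
          · have hmeq : m = x3f n := by
              rw [heq]; simp [x3f]
            rw [SetLike.mem_coe, hmeq]
            exact hx3span
          · refine Submodule.subset_span ⟨Sum.inl i, ?_⟩
            refine congrArg (fun m' => N.mkQ (monomial m' 1)) ?_
            rw [heq]; simp [mu3]
          · refine Submodule.subset_span ⟨Sum.inr (Sum.inl i), ?_⟩
            refine congrArg (fun m' => N.mkQ (monomial m' 1)) ?_
            rw [heq]; simp [mu3]
          · refine Submodule.subset_span ⟨Sum.inr (Sum.inr i), ?_⟩
            refine congrArg (fun m' => N.mkQ (monomial m' 1)) ?_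
            rw [heq]; simp [mu3]
      · rw [Submodule.span_le]
        rintro _ ⟨k, rfl⟩
        exact Submodule.mem_map_of_mem
          ((mem_homogeneousSubmodule _ _).mpr (isHomogeneous_monomial _ (mu3_degree k)))
    have hind : LinearIndependent ℂ (fun k => N.mkQ (monomial (mu3 n k) (1:ℂ))) := by
      rw [Fintype.linearIndependent_iff]
      intro g hg k
      set p : MvPolynomial (Unit ⊕ Fin n) ℂ := ∑ y, g y • monomial (mu3 n y) 1 with hpdef
      have hqp : N.mkQ p = 0 := by
        rw [hpdef, map_sum]
        simpa using hg
      have hpI : p ∈ I := hq0' p hqp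
      have hcoeff : coeff (mu3 n k) p = g k := by
        rw [hpdef, coeff_sum]
        rw [Finset.sum_eq_single k]
        · simp [coeff_smul, coeff_monomial]
        · intro y _ hyk
          rw [coeff_smul, coeff_monomial, if_neg (fun h => hyk (mu3_inj h))]
          simp
        · simp
      have hx3coeff : coeff (x3f n) p = 0 := by
        rw [hpdef, coeff_sum]
        refine Finset.sum_eq_zero fun y _ => ?_
        rw [coeff_smul, coeff_monomial, if_neg (mu3_ne_x3f y)]
        simp
      have := (hkey p hpI).2.2 (mu3 n k) (mu3_degree k) (mu3_not_mixed k)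
      rw [hcoeff, hx3coeff, zero_mul] at this
      exact this
    show Module.finrank ℂ ((homogeneousSubmodule (Unit ⊕ Fin n) ℂ 3).map N.mkQ) = 3 * n
    rw [hW3, finrank_span_eq_card hind]
    simp only [Fintype.card_sum, Fintype.card_fin]
    omega
  -- the evaluation map
  have hmain : ∀ d, 3 ≤ d → hfQ N d = 3 * n := by
    set E : MvPolynomial (Unit ⊕ Fin n) ℂ →ₗ[ℂ] ({x // x ∈ 𝕏} → ℂ) :=
      LinearMap.pi (fun P : {x // x ∈ 𝕏} => (aeval (Projectivization.rep
        (P : Projectivization ℂ ((Unit ⊕ Fin n) → ℂ)))).toLinearMap) with hEdef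
    have hEapply : ∀ (p : MvPolynomial (Unit ⊕ Fin n) ℂ) (P : {x // x ∈ 𝕏}),
        E p P = eval (Projectivization.rep (P : Projectivization ℂ ((Unit ⊕ Fin n) → ℂ))) p := by
      intro p P
      show (aeval _) p = eval _ p
      rw [← coe_aeval_eq_eval]
      rfl
    have hNker : N ≤ LinearMap.ker E := by
      intro p hp
      have hmem : p ∈ I := (Submodule.restrictScalars_mem ℂ I p).mp hp
      rw [LinearMap.mem_ker]
      funext P
      have := ((hPVI p).mp hmem) (P : Projectivization ℂ ((Unit ⊕ Fin n) → ℂ)) P.2 1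
      rw [one_smul] at this
      rw [show (0 : {x // x ∈ 𝕏} → ℂ) P = 0 from rfl, hEapply]
      exact this
    set Ebar := N.liftQ E hNker with hEbardef
    have hup : ∀ d, 1 ≤ d → hfQ N d ≤ 3 * n := by
      intro d hd
      haveI := hfinW d
      set W := (homogeneousSubmodule (Unit ⊕ Fin n) ℂ d).map N.mkQ with hWd
      have hinj : Function.Injective (Ebar.comp W.subtype) := by
        rw [injective_iff_map_eq_zero]
        intro x hx
        obtain ⟨p, hp, hqp⟩ := Submodule.mem_map.mp x.2
        have hEp : E p = 0 := by
          have hx' : Ebar (N.mkQ p) = 0 := by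
            rw [hqp]
            exact hx
          rwa [Submodule.mkQ_apply, Submodule.liftQ_apply] at hx'
        have hphom : MvPolynomial.IsHomogeneous p d := (mem_homogeneousSubmodule _ _).mp hp
        have hpI : p ∈ I := by
          rw [hPVI]
          intro P hP c
          rw [eval_smul_of_isHomogeneous hphom c]
          have : eval (Projectivization.rep P) p = 0 := by
            have := congrFun hEp (⟨P, hP⟩ : {x // x ∈ 𝕏})
            rwa [hEapply] at this
          rw [this, mul_zero]
        refine Subtype.ext ?_
        rw [show ((0 : W) : MvPolynomial (Unit ⊕ Fin n) ℂ ⧸ N) = 0 from rfl, ← hqp]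
        exact hq0 p hpI
      have hle := LinearMap.finrank_le_finrank_of_injective hinj
      rw [Module.finrank_fintype_fun_eq_card, Fintype.card_coe, hcard] at hle
      exact hle
    -- a linear form not vanishing at any point of 𝕏
    have hell : ∃ ℓ : MvPolynomial (Unit ⊕ Fin n) ℂ, ℓ.IsHomogeneous 1 ∧
        ∀ P ∈ 𝕏, eval (Projectivization.rep P) ℓ ≠ 0 := by
      classical
      set G : MvPolynomial (Unit ⊕ Fin n) ℂ :=
        ∏ P ∈ 𝕏, (∑ x : Unit ⊕ Fin n, C (Projectivization.rep P x) * X x) with hGdef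
      have hfactor_ne : ∀ P : Projectivization ℂ ((Unit ⊕ Fin n) → ℂ),
          (∑ x : Unit ⊕ Fin n, C (Projectivization.rep P x) * X x) ≠ 0 := by
        intro P h0
        have hrep := Projectivization.rep_nonzero P
        obtain ⟨x, hx⟩ : ∃ x, Projectivization.rep P x ≠ 0 := by
          by_contra hc; push_neg at hc
          exact hrep (funext hc)
        have hco : coeff (Finsupp.single x 1)
            (∑ y : Unit ⊕ Fin n, C (Projectivization.rep P y) * X y) =
            Projectivization.rep P x := by
          rw [coeff_sum]
          rw [Finset.sum_eq_single x]
          · rw [coeff_C_mul, coeff_X', if_pos rfl, mul_one]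
          · intro y _ hyx
            rw [coeff_C_mul, coeff_X',
              if_neg (fun h => hyx (single_eq_single_nat one_ne_zero h)), mul_zero]
          · simp
        rw [h0] at hco
        simp at hco
        exact hx hco.symm
      have hGne : G ≠ 0 := by
        rw [hGdef]
        exact Finset.prod_ne_zero_iff.mpr (fun P _ => hfactor_ne P)
      obtain ⟨w, hw⟩ : ∃ w : (Unit ⊕ Fin n) → ℂ, eval w G ≠ 0 := by
        by_contra hc; push_neg at hc
        exact hGne (MvPolynomial.funext (fun v => by rw [hc v, map_zero]))
      refine ⟨∑ x : Unit ⊕ Fin n, C (w x) * X x, ?_, ?_⟩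
      · refine IsHomogeneous.sum _ _ _ fun x _ => ?_
        exact (isHomogeneous_X _ _).C_mul _
      · intro P hP hzero
        have heval : eval w (∑ x : Unit ⊕ Fin n, C (Projectivization.rep P x) * X x) = 0 := by
          rw [map_sum] at hzero ⊢
          rw [← hzero]
          refine Finset.sum_congr rfl fun x _ => ?_
          simp [mul_comm]
        apply hw
        rw [hGdef, map_prod]
        exact Finset.prod_eq_zero hP heval
    obtain ⟨ℓ, hℓhom, hℓne⟩ := hell
    -- multiffication map step
    have hstep : ∀ d, 1 ≤ d → hfQ N d ≤ hfQ N (d + 1) := by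
      intro d hd
      haveI := hfinW (d + 1)
      have hmul : ∀ p ∈ N, (LinearMap.mulLeft ℂ ℓ) p ∈ N := by
        intro p hp
        rw [LinearMap.mulLeft_apply]
        exact (Submodule.restrictScalars_mem ℂ I _).mpr
          (Ideal.mul_mem_left I ℓ ((Submodule.restrictScalars_mem ℂ I p).mp hp))
      set φ := Submodule.mapQ N N (LinearMap.mulLeft ℂ ℓ) hmul with hφdef
      have hφq : ∀ p, φ (N.mkQ p) = N.mkQ (ℓ * p) := by
        intro p
        rw [Submodule.mkQ_apply, Submodule.mkQ_apply, Submodule.mapQ_apply,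
          LinearMap.mulLeft_apply]
      set W := (homogeneousSubmodule (Unit ⊕ Fin n) ℂ d).map N.mkQ with hWd
      set ψ := φ.comp W.subtype with hψdef
      have hψinj : Function.Injective ψ := by
        rw [injective_iff_map_eq_zero]
        intro x hx
        obtain ⟨p, hp, hqp⟩ := Submodule.mem_map.mp x.2
        have hphom : MvPolynomial.IsHomogeneous p d := (mem_homogeneousSubmodule _ _).mp hp
        have hql : N.mkQ (ℓ * p) = 0 := by
          rw [← hφq]
          rw [hqp]
          exact hx
        have hlpI : ℓ * p ∈ I := hq0' _ hql
        have hpI : p ∈ I := by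
          rw [hPVI]
          intro P hP c
          have hev := ((hPVI (ℓ * p)).mp hlpI) P hP c
          rw [map_mul] at hev
          rcases eq_or_ne c 0 with rfl | hc
          · rw [eval_smul_of_isHomogeneous hphom 0, zero_pow (by omega), zero_mul]
          · have hevl : eval (c • Projectivization.rep P) ℓ ≠ 0 := by
              rw [eval_smul_of_isHomogeneous hℓhom c, pow_one]
              exact mul_ne_zero hc (hℓne P hP)
            rcases mul_eq_zero.mp hev with h | h
            · exact absurd h hevl
            · exact h
        refine Subtype.ext ?_
        rw [show ((0 : W) : MvPolynomial (Unit ⊕ Fin n) ℂ ⧸ N) = 0 from rfl, ← hqp]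
        exact hq0 p hpI
      have hrange : LinearMap.range ψ ≤
          (homogeneousSubmodule (Unit ⊕ Fin n) ℂ (d + 1)).map N.mkQ := by
        rintro _ ⟨x, rfl⟩
        obtain ⟨p, hp, hqp⟩ := Submodule.mem_map.mp x.2
        have hphom : MvPolynomial.IsHomogeneous p d := (mem_homogeneousSubmodule _ _).mp hp
        have : ψ x = N.mkQ (ℓ * p) := by
          rw [hψdef, LinearMap.comp_apply, Submodule.subtype_apply, ← hqp, hφq]
        rw [this]
        refine Submodule.mem_map_of_mem ((mem_homogeneousSubmodule _ _).mpr ?_)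
        have := hℓhom.mul hphom
        rwa [Nat.add_comm] at this
      calc Module.finrank ℂ W = Module.finrank ℂ (LinearMap.range ψ) :=
            (LinearMap.finrank_range_of_inj hψinj).symm
        _ ≤ Module.finrank ℂ ((homogeneousSubmodule (Unit ⊕ Fin n) ℂ (d + 1)).map N.mkQ) :=
            Submodule.finrank_mono hrange
    intro d hd
    induction d, hd using Nat.le_induction with
    | base => exact deg3
    | succ d hd ih =>
      refine le_antisymm (hup (d + 1) (by omega)) ?_
      rw [← ih]
      exact hstep d (by omega)
  exact ⟨deg0, deg1, deg2, hmain⟩
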